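/- Let d ≤ e and n be positive natural numbers, let 𝒜 be a symmetric d-way tensor of dimension n over ℝ. Then there exists a symmetric e-way tensor ℬ of dimension n over ℝ such that for every i : Fin d → Fin n, ℬ applied to the index that equals i on the first d positions and equals 0 (the first index value) on the remaining e − d positions equals 𝒜(i). -/

import Mathlib

open List

/-- If two tuples are permutations of one another, their sorted versions coincide. -/
lemma sorted_eq_of_perm {m : ℕ} {α : Type*} [LinearOrder α] {f g : Fin m → α}
    (h : List.ofFn f ~ List.ofFn g) :
    f ∘ Tuple.sort f = g ∘ Tuple.sort g := by
  apply List.ofFn_injective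
  refine List.Perm.eq_of_sortedLE (Tuple.monotone_sort f).sortedLE_ofFn
    (Tuple.monotone_sort g).sortedLE_ofFn ?_
  exact ((Tuple.sort f).ofFn_comp_perm f).trans (h.trans ((Tuple.sort g).ofFn_comp_perm g).symm)

lemma perm_val_eq {m : ℕ} {α : Type*} [LinearOrder α] {f g : Fin m → α}
    (h : List.ofFn f ~ List.ofFn g) (A : (Fin m → α) → ℝ)
    (hA : ∀ (σ : Equiv.Perm (Fin m)) (i : Fin m → α), A (i ∘ σ) = A i) :
    A f = A g := by
  rw [← hA (Tuple.sort f) f, ← hA (Tuple.sort g) g, sorted_eq_of_perm h]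

/-- Any symmetric `d`-way tensor can be embedded into a symmetric `e`-way tensor
(`d ≤ e`) whose value on an index equal to `i` on the first `d` positions and to
`0` on the remaining positions equals the value of the original tensor at `i`. -/
theorem symmetric_tensor_embedding (d e n : ℕ) (hd : 0 < d) (hn : 0 < n) (hde : d ≤ e)
    (A : (Fin d → Fin n) → ℝ)
    (hA : ∀ (σ : Equiv.Perm (Fin d)) (i : Fin d → Fin n), A (i ∘ σ) = A i) :
    ∃ B : (Fin e → Fin n) → ℝ,
      (∀ (σ : Equiv.Perm (Fin e)) (j : Fin e → Fin n), B (j ∘ σ) = B j) ∧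
      ∀ i : Fin d → Fin n,
        B (fun j : Fin e => if h : (j : ℕ) < d then i ⟨j, h⟩ else ⟨0, hn⟩) = A i := by
  classical
  set z : Fin n := ⟨0, hn⟩ with hz
  -- value on a multiset
  set M : Multiset (Fin n) → ℝ := fun m =>
    if h : ∃ i : Fin d → Fin n,
        (↑(List.ofFn i) + Multiset.replicate (e - d) z : Multiset (Fin n)) = m
    then A h.choose else 0 with hM
  refine ⟨fun j => M (↑(List.ofFn j)), ?_, ?_⟩
  · intro σ j
    exact congrArg M (Multiset.coe_eq_coe.mpr (σ.ofFn_comp_perm j))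
  · intro i
    have hlist : List.ofFn (fun j : Fin e => if h : (j : ℕ) < d then i ⟨j, h⟩ else z)
        = List.ofFn i ++ List.replicate (e - d) z := by
      apply List.ext_getElem
      · simp [Nat.add_sub_cancel' hde]
      · intro k h1 h2
        simp only [List.getElem_ofFn]
        rcases lt_or_ge k d with hk | hk
        · rw [List.getElem_append_left (by simpa using hk)]
          simp [hk]
        · rw [List.getElem_append_right (by simpa using hk)]
          simp [Nat.not_lt.mpr hk]
    have hex : ∃ i' : Fin d → Fin n,
        (↑(List.ofFn i') + Multiset.replicate (e - d) z : Multiset (Fin n))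
          = ↑(List.ofFn (fun j : Fin e => if h : (j : ℕ) < d then i ⟨j, h⟩ else z)) := by
      refine ⟨i, ?_⟩
      rw [hlist, ← Multiset.coe_replicate, ← Multiset.coe_add]
    rw [hM]
    simp only [hex, dif_pos]
    have hc := hex.choose_spec
    have hc2 : (↑(List.ofFn hex.choose) + Multiset.replicate (e - d) z : Multiset (Fin n))
        = ↑(List.ofFn i) + Multiset.replicate (e - d) z := by
      rw [hc, hlist, ← Multiset.coe_replicate, ← Multiset.coe_add]
    have : (↑(List.ofFn hex.choose) : Multiset (Fin n)) = ↑(List.ofFn i) :=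
      add_right_cancel hc2
    rw [Multiset.coe_eq_coe] at this
    exact perm_val_eq this A hA
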